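/- For each fixed b < 0 and each n ≥ 2, the real roots of a ↦ P_{n+1}(a,b) and a ↦ P_n(a,b) strictly interlace: between any two consecutive roots of P_{n+1}(·,b) lies exactly one root of P_n(·,b), and P_{n+1}(·,b) has exactly one more root than P_n(·,b). -/

import Mathlib

/-- `Pr n a b` is defined by `Pr 0 = 0`, `Pr 1 = 1`,
`Pr (n+2) = a * Pr (n+1) + b * Pr n`. -/
def Pr : ℕ → ℝ → ℝ → ℝ
  | 0, _, _ => 0
  | 1, _, _ => 1
  | (n + 2), a, b => a * Pr (n + 1) a b + b * Pr n a b

open Real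

lemma Pr_step (m : ℕ) (a b : ℝ) :
    Pr (m+2) a b = a * Pr (m+1) a b + b * Pr m a b := rfl

lemma Pr_sin (c θ : ℝ) : ∀ n : ℕ,
    Pr (n+1) (2*c*Real.cos θ) (-(c^2)) * Real.sin θ = c^n * Real.sin ((n+1)*θ) := by
  intro n
  induction n using Nat.twoStepInduction with
  | zero => simp [Pr]
  | one =>
    rw [Pr_step]
    push_cast
    rw [show ((1:ℝ)+1)*θ = 2*θ by ring, Real.sin_two_mul]
    simp [Pr]
    ring
  | more n ih1 ih2 =>
    rw [Pr_step]
    have trig : Real.sin ((↑(n+2)+1)*θ)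
        = 2*Real.cos θ * Real.sin ((↑(n+1)+1)*θ) - Real.sin ((↑n+1)*θ) := by
      push_cast
      rw [show ((n:ℝ)+2+1)*θ = (((n:ℝ)+2)*θ) + θ by ring,
          show ((n:ℝ)+1)*θ = (((n:ℝ)+2)*θ) - θ by ring,
          Real.sin_add, Real.sin_sub]
      ring
    push_cast at ih1 ih2 trig ⊢
    linear_combination (2*c*Real.cos θ) * ih2 + (-(c^2)) * ih1 - c^(n+2) * trig

lemma Pr_pos (c a : ℝ) (hc : 0 < c) (ha : 2*c ≤ a) :
    ∀ n : ℕ, c * Pr n a (-(c^2)) ≤ Pr (n+1) a (-(c^2)) ∧ 0 < Pr (n+1) a (-(c^2)) := by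
  intro n
  induction n with
  | zero => simp [Pr]
  | succ n ih =>
    obtain ⟨h1, h2⟩ := ih
    rw [Pr_step]
    constructor
    · nlinarith [mul_nonneg (by linarith : (0:ℝ) ≤ a - 2*c) h2.le,
        mul_le_mul_of_nonneg_left h1 hc.le]
    · nlinarith [mul_nonneg (by linarith : (0:ℝ) ≤ a - 2*c) h2.le,
        mul_le_mul_of_nonneg_left h1 hc.le]

lemma Pr_neg (a b : ℝ) : ∀ n : ℕ, Pr n (-a) b = (-1)^(n+1) * Pr n a b := by
  intro n
  induction n using Nat.twoStepInduction with
  | zero => simp [Pr]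
  | one => simp [Pr]
  | more n ih1 ih2 =>
    rw [Pr_step, Pr_step, ih1, ih2]
    ring


lemma Pr_root_iff (c : ℝ) (hc : 0 < c) (n : ℕ) (a : ℝ) :
    Pr (n+1) a (-(c^2)) = 0 ↔
      ∃ k : ℕ, 1 ≤ k ∧ k ≤ n ∧ a = 2*c*Real.cos (k*Real.pi/(n+1)) := by
  constructor
  · intro h
    rcases le_or_gt (2*c) a with ha | ha
    · exact absurd h (ne_of_gt (Pr_pos c a hc ha n).2)
    rcases le_or_gt a (-(2*c)) with ha' | ha'
    · have h2 : 0 < Pr (n+1) (-a) (-(c^2)) := (Pr_pos c (-a) hc (by linarith) n).2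
      have hpar := Pr_neg a (-(c^2)) (n+1)
      rw [h, mul_zero] at hpar
      exact absurd hpar (ne_of_gt h2)
    · set x := a / (2*c) with hx
      have h2c : (0:ℝ) < 2*c := by linarith
      have hx1 : -1 < x := by rw [hx, lt_div_iff₀ h2c]; linarith
      have hx2 : x < 1 := by rw [hx, div_lt_one h2c]; linarith
      set θ := Real.arccos x with hθ
      have hθ1 : 0 < θ := Real.arccos_pos.2 hx2
      have hθ2 : θ < π := lt_of_le_of_ne (Real.arccos_le_pi x) (fun hcon => absurd (Real.arccos_eq_pi.1 hcon) (by linarith))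
      have ha_eq : a = 2*c*Real.cos θ := by
        rw [hθ, Real.cos_arccos hx1.le hx2.le, hx]; field_simp
      have key := Pr_sin c θ n
      rw [← ha_eq, h, zero_mul] at key
      have hs : Real.sin ((n+1)*θ) = 0 := by
        have := pow_ne_zero n hc.ne'
        field_simp at key
        exact (mul_eq_zero.1 key.symm).resolve_left this
      rw [Real.sin_eq_zero_iff] at hs
      obtain ⟨k, hk⟩ := hs
      have hπ := Real.pi_pos
      have hk1 : (0:ℝ) < k * π := by rw [hk]; positivity
      have hk2 : (k:ℝ) * π < (n+1) * π := by
        rw [hk]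
        have : ((n:ℝ)+1) * θ < ((n:ℝ)+1) * π := by
          apply mul_lt_mul_of_pos_left hθ2; positivity
        linarith
      have hk1' : 0 < k := by
        by_contra hcon
        push_neg at hcon
        have : (k:ℝ) ≤ 0 := by exact_mod_cast hcon
        nlinarith
      have hk2' : k < n + 1 := by
        have : (k:ℝ) < n + 1 := by
          by_contra hcon
          push_neg at hcon
          nlinarith
        exact_mod_cast this
      refine ⟨k.toNat, by omega, by omega, ?_⟩
      have hθval : θ = (k:ℝ) * π / (n+1) := by
        field_simp at hk ⊢
        linarith [hk]
      rw [ha_eq, hθval]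
      have hcast : ((k.toNat:ℕ):ℝ) = (k:ℝ) := by exact_mod_cast Int.toNat_of_nonneg hk1'.le
      rw [hcast]
  · rintro ⟨k, hk1, hk2, rfl⟩
    have hπ := Real.pi_pos
    set θ := (k:ℝ)*π/(n+1) with hθ
    have hn1 : (0:ℝ) < (n:ℝ)+1 := by positivity
    have hθ1 : 0 < θ := by
      rw [hθ]
      have : (0:ℝ) < (k:ℝ) := by exact_mod_cast hk1
      positivity
    have hθ2 : θ < π := by
      rw [hθ, div_lt_iff₀ hn1]
      have : (k:ℝ) < (n:ℝ)+1 := by exact_mod_cast (by omega : k < n+1)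
      nlinarith
    have hs : Real.sin θ ≠ 0 := (Real.sin_pos_of_pos_of_lt_pi hθ1 hθ2).ne'
    have key := Pr_sin c θ n
    have : ((n:ℝ)+1) * θ = k * π := by rw [hθ]; field_simp
    rw [this, Real.sin_nat_mul_pi, mul_zero] at key
    exact (mul_eq_zero.1 key).resolve_right hs

-- helper: compare 2c cos(k π / d) for k in [0,d]
lemma cos_cmp (c : ℝ) (hc : 0 < c) (x y dx dy : ℝ) (hx0 : 0 ≤ x) (hx : x ≤ dx)
    (hy0 : 0 < y) (hy : y ≤ dy) (hdx : 0 < dx) (hdy : 0 < dy)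
    (hlt : y * dx < x * dy) :
    2*c*Real.cos (x*π/dx) < 2*c*Real.cos (y*π/dy) := by
  have hπ := Real.pi_pos
  have h1 : y*π/dy < x*π/dx := by
    rw [div_lt_div_iff₀ hdy hdx]
    calc y*π*dx = (y*dx)*π := by ring
    _ < (x*dy)*π := by nlinarith
    _ = x*π*dy := by ring
  have h2 : 0 ≤ y*π/dy := by positivity
  have h3 : x*π/dx ≤ π := by
    rw [div_le_iff₀ hdx]
    nlinarith
  have := Real.cos_lt_cos_of_nonneg_of_le_pi h2 h3 h1
  nlinarith

set_option maxHeartbeats 2000000 in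
theorem stmt_12 (b : ℝ) (hb : b < 0) (n : ℕ) (hn : 2 ≤ n) :
    ∃ (α : Fin n → ℝ) (β : Fin (n - 1) → ℝ),
      StrictMono α ∧ StrictMono β ∧
      (∀ a : ℝ, Pr (n + 1) a b = 0 ↔ ∃ i, a = α i) ∧
      (∀ a : ℝ, Pr n a b = 0 ↔ ∃ j, a = β j) ∧
      ∀ j : Fin (n - 1),
        α (Fin.castLE (by omega) j) < β j ∧
          β j < α ⟨j.val + 1, by omega⟩ := by
  obtain ⟨m, rfl⟩ : ∃ m, n = m + 2 := ⟨n - 2, by omega⟩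
  obtain ⟨c, hc, rfl⟩ : ∃ c, 0 < c ∧ b = -(c^2) :=
    ⟨Real.sqrt (-b), Real.sqrt_pos.2 (by linarith),
      by rw [Real.sq_sqrt (by linarith : (0:ℝ) ≤ -b)]; ring⟩
  have hπ := Real.pi_pos
  refine ⟨fun i => 2*c*Real.cos (((m:ℝ)+2-(i:ℕ))*π/(m+3)),
          fun j => 2*c*Real.cos (((m:ℝ)+1-(j:ℕ))*π/(m+2)), ?_, ?_, ?_, ?_, ?_⟩
  · intro i i' hii
    have hi' : ((i':ℕ):ℝ) ≤ (m:ℝ)+1 := by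
      have h := i'.isLt
      have h2 : (i':ℕ) ≤ m+1 := by omega
      exact_mod_cast h2
    have hii' : ((i:ℕ):ℝ) < ((i':ℕ):ℝ) := by exact_mod_cast hii
    refine cos_cmp c hc _ _ _ _ (by linarith) (by linarith) (by linarith)
      (by linarith) (by positivity) (by positivity) (by nlinarith)
  · intro j j' hjj
    have hj' : ((j':ℕ):ℝ) ≤ (m:ℝ) := by
      have h := j'.isLt
      have h2 : (j':ℕ) ≤ m := by omega
      exact_mod_cast h2
    have hjj' : ((j:ℕ):ℝ) < ((j':ℕ):ℝ) := by exact_mod_cast hjj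
    refine cos_cmp c hc _ _ _ _ (by linarith) (by linarith) (by linarith)
      (by linarith) (by positivity) (by positivity) (by nlinarith)
  · intro a
    rw [Pr_root_iff c hc (m+2) a]
    constructor
    · rintro ⟨k, hk1, hk2, rfl⟩
      beta_reduce
      refine ⟨⟨m+2-k, by omega⟩, ?_⟩
      congr 2
      push_cast [Nat.cast_sub (by omega : k ≤ m+2)]
      ring_nf
    · rintro ⟨i, rfl⟩
      beta_reduce
      refine ⟨m+2-(i:ℕ), by omega, by omega, ?_⟩
      congr 2
      have := i.isLt
      push_cast [Nat.cast_sub (by omega : (i:ℕ) ≤ m+2)]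
      ring_nf
  · intro a
    rw [show (m+2) = (m+1)+1 by omega, Pr_root_iff c hc (m+1) a]
    constructor
    · rintro ⟨k, hk1, hk2, rfl⟩
      beta_reduce
      refine ⟨⟨m+1-k, by omega⟩, ?_⟩
      congr 2
      push_cast [Nat.cast_sub (by omega : k ≤ m+1)]
      ring_nf
    · rintro ⟨j, rfl⟩
      beta_reduce
      have := j.isLt
      refine ⟨m+1-(j:ℕ), by omega, by omega, ?_⟩
      congr 2
      push_cast [Nat.cast_sub (by omega : (j:ℕ) ≤ m+1)]
      ring_nf
  · intro j
    beta_reduce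
    have hj : (j:ℕ) ≤ m := by have := j.isLt; omega
    have hjr : ((j:ℕ):ℝ) ≤ (m:ℝ) := by exact_mod_cast hj
    constructor
    · show 2*c*Real.cos (((m:ℝ)+2-((Fin.castLE _ j : Fin (m+2)):ℕ))*π/(m+3)) < _
      rw [Fin.coe_castLE]
      refine cos_cmp c hc _ _ _ _ (by linarith) (by linarith) (by linarith)
        (by linarith) (by positivity) (by positivity) (by nlinarith)
    · show _ < 2*c*Real.cos (((m:ℝ)+2-((⟨(j:ℕ)+1, by omega⟩ : Fin (m+2)):ℕ))*π/(m+3))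
      push_cast
      refine cos_cmp c hc _ _ _ _ (by linarith) (by linarith) (by linarith)
        (by linarith) (by positivity) (by positivity) (by nlinarith)
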